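/- For every cotransverse map f : [n] → [n], the map T(f) : [0,1]^n → [0,1]^n is continuous, strictly increasing (x ≤ y implies T(f)(x) ≤ T(f)(y), and if moreover x ≤ y and T(f)(x) = T(f)(y) then x = y), and satisfies h(T(f)(x)) = h(x), i.e. Σᵢ T(f)(x)ᵢ = Σᵢ xᵢ, for all x ∈ [0,1]^n. -/

import Mathlib

open scoped ENNReal

instance : Fact ((0:ℝ) ≤ 1) := ⟨zero_le_one⟩

/- The directed metric `d⃗₁` on the vertices `{0,1}^n`. -/
open Classical in
noncomputable def vd {n : ℕ} (x y : Fin n → Bool) : ℝ≥0∞ :=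
  if x ≤ y then ∑ i, (if x i = y i then 0 else 1) else ⊤

def Cotransverse {m n : ℕ} (f : (Fin m → Bool) → (Fin n → Bool)) : Prop :=
  StrictMono f ∧ ∀ x y, vd x y = 1 → vd (f x) (f y) = 1

/-- weight of a vertex -/
def wt {n : ℕ} (v : Fin n → Bool) : ℕ := ∑ i, (if v i = true then 1 else 0)

lemma wt_le {n : ℕ} (v : Fin n → Bool) : wt v ≤ n := by
  have : wt v ≤ ∑ _i : Fin n, 1 := Finset.sum_le_sum (fun i _ => by split <;> omega)
  simpa using this

lemma wt_eq_n {n : ℕ} (v : Fin n → Bool) (h : wt v = n) : v = ⊤ := by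
  by_contra hv
  have : ∃ i, v i = false := by
    by_contra h'
    push_neg at h'
    apply hv; funext i
    have := h' i
    simp [Bool.not_eq_false] at this
    simp [this, Pi.top_apply]
  obtain ⟨i, hi⟩ := this
  have : wt v < ∑ _i : Fin n, 1 := by
    apply Finset.sum_lt_sum (fun j _ => by split <;> omega) ⟨i, Finset.mem_univ i, by simp [hi]⟩
  simp at this; omega

lemma wt_zero {n : ℕ} (v : Fin n → Bool) (h : wt v = 0) : v = ⊥ := by
  rw [wt, Finset.sum_eq_zero_iff] at h
  funext i
  have := h i (Finset.mem_univ i)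
  by_cases hv : v i = true
  · simp [hv] at this
  · simp [Bool.not_eq_true] at hv; simp [hv, Pi.bot_apply]

lemma wt_add_of_le {n : ℕ} {a b : Fin n → Bool} (h : a ≤ b) :
    wt b = wt a + ∑ i, (if a i = b i then 0 else 1) := by
  rw [wt, wt, ← Finset.sum_add_distrib]
  apply Finset.sum_congr rfl
  intro i _
  have hi := h i
  revert hi
  cases ha : a i <;> cases hb : b i <;> simp

lemma vd_one {n : ℕ} {a b : Fin n → Bool} (h : vd a b = 1) :
    a ≤ b ∧ wt b = wt a + 1 := by
  rw [vd] at h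
  split at h
  case isFalse => simp at h
  case isTrue hle =>
    refine ⟨hle, ?_⟩
    rw [wt_add_of_le hle]
    have h2 : (∑ i, (if a i = b i then (0:ℝ≥0∞) else 1))
        = ∑ i, (((if a i = b i then (0:ℕ) else 1) : ℕ) : ℝ≥0∞) :=
      Finset.sum_congr rfl fun i _ => by split <;> simp
    rw [h2, ← Nat.cast_sum] at h
    have h3 : (∑ i, if a i = b i then (0:ℕ) else 1) = 1 := by exact_mod_cast h
    omega

lemma vd_update {n : ℕ} (v : Fin n → Bool) (i : Fin n) (hi : v i = true) :
    vd (Function.update v i false) v = 1 := by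
  have hle : Function.update v i false ≤ v := by
    intro j
    by_cases hj : j = i
    · subst hj; simp [Function.update_self, hi]
    · simp [Function.update_of_ne hj]
  rw [vd, if_pos hle]
  rw [Finset.sum_eq_single_of_mem i (Finset.mem_univ i)]
  · simp [Function.update_self, hi]
  · intro j _ hj
    simp [Function.update_of_ne hj]

lemma wt_update {n : ℕ} (v : Fin n → Bool) (i : Fin n) (hi : v i = true) :
    wt v = wt (Function.update v i false) + 1 := by
  have hle : Function.update v i false ≤ v := by
    intro j
    by_cases hj : j = i
    · subst hj; simp [Function.update_self, hi]
    · simp [Function.update_of_ne hj]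
  rw [wt_add_of_le hle, Finset.sum_eq_single_of_mem i (Finset.mem_univ i)]
  · simp [Function.update_self, hi]
  · intro j _ hj
    simp [Function.update_of_ne hj]

lemma exists_true_of_wt_pos {n : ℕ} {v : Fin n → Bool} (h : wt v ≠ 0) : ∃ i, v i = true := by
  by_contra h'
  push_neg at h'
  apply h
  rw [wt]
  apply Finset.sum_eq_zero
  intro i _
  simp [h' i]

lemma wt_f_aux {n : ℕ} {f : (Fin n → Bool) → (Fin n → Bool)} (hf : Cotransverse f) :
    ∀ m : ℕ, ∀ v : Fin n → Bool, wt v = m → wt (f v) = wt (f ⊥) + m := by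
  intro m
  induction m with
  | zero => intro v hv; rw [wt_zero v hv]; simp
  | succ m ih =>
    intro v hv
    obtain ⟨i, hi⟩ := exists_true_of_wt_pos (by omega : wt v ≠ 0)
    set v' := Function.update v i false with hv'
    have h1 : wt v = wt v' + 1 := wt_update v i hi
    have h2 := hf.2 _ _ (vd_update v i hi)
    have h3 := (vd_one h2).2
    rw [h3, ih v' (by omega)]
    omega

lemma wt_f {n : ℕ} {f : (Fin n → Bool) → (Fin n → Bool)} (hf : Cotransverse f) :
    (∀ v, wt (f v) = wt v) ∧ f ⊤ = ⊤ := by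
  have haux := wt_f_aux hf
  have htopwt : wt (⊤ : Fin n → Bool) = n := by
    rw [wt]; simp [Pi.top_apply]
  have h1 : wt (f ⊤) = wt (f ⊥) + n := haux n ⊤ htopwt
  have h2 : wt (f ⊥) = 0 := by have := wt_le (f ⊤); omega
  constructor
  · intro v
    have := haux (wt v) v rfl
    omega
  · exact wt_eq_n _ (by omega)

/-- The topologized map `T(f) : [0,1]^m → [0,1]^n` associated with a map
`f : {0,1}^m → {0,1}^n`, defined coordinatewise by the max-min (sup-inf)
formula, the sup and inf being taken in the complete lattice `[0,1]`
(so `sup ∅ = 0` and `inf ∅ = 1`). -/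
noncomputable def Tmap {m n : ℕ} (f : (Fin m → Bool) → (Fin n → Bool))
    (x : Fin m → unitInterval) : Fin n → unitInterval :=
  fun i => ⨆ (ε : Fin m → Bool) (_ : f ε i = true), ⨅ (k : Fin m) (_ : ε k = true), x k

lemma bool_le_of_true {a b : Bool} (h : a ≤ b) (ha : a = true) : b = true := by
  subst ha
  cases b
  · exact absurd h (by decide)
  · rfl

lemma monotone_of_cotransverse {m n : ℕ} {f : (Fin m → Bool) → (Fin n → Bool)}
    (hf : Cotransverse f) : Monotone f := by
  intro a b hab
  rcases eq_or_lt_of_le hab with h | h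
  · rw [h]
  · exact le_of_lt (hf.1 h)

open Classical in
lemma le_Tmap_iff {n : ℕ} {f : (Fin n → Bool) → (Fin n → Bool)}
    (hmono : Monotone f) (htop : f ⊤ = ⊤)
    (x : Fin n → unitInterval) (i : Fin n) (t : unitInterval) :
    t ≤ Tmap f x i ↔ f (fun k => decide (t ≤ x k)) i = true := by
  have htopi : f ⊤ i = true := by rw [htop]; rfl
  constructor
  · intro h
    -- the sup is attained
    have hne : Nonempty {ε : Fin n → Bool // f ε i = true} := ⟨⟨⊤, htopi⟩⟩
    obtain ⟨⟨ε0, hε0⟩, hmax⟩ := Finite.exists_max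
      (fun ε : {ε : Fin n → Bool // f ε i = true} =>
        ⨅ (k : Fin n) (_ : ε.1 k = true), x k)
    have heq : Tmap f x i = ⨅ (k : Fin n) (_ : ε0 k = true), x k := by
      apply le_antisymm
      · rw [Tmap]
        apply iSup₂_le
        intro ε hε
        exact hmax ⟨ε, hε⟩
      · exact le_iSup₂ (f := fun ε (_ : f ε i = true) => ⨅ (k : Fin n) (_ : ε k = true), x k) ε0 hε0
    rw [heq] at h
    have hεχ : ε0 ≤ fun k => decide (t ≤ x k) := by
      intro k
      by_cases hk : ε0 k = true
      · rw [hk]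
        have : t ≤ x k := le_trans h (iInf₂_le k hk)
        simp [this]
      · simp [Bool.not_eq_true] at hk
        rw [hk]; exact Bool.false_le _
    exact bool_le_of_true (hmono hεχ i) hε0
  · intro h
    rw [Tmap]
    refine le_trans ?_ (le_iSup₂ (f := fun ε (_ : f ε i = true) =>
      ⨅ (k : Fin n) (_ : ε k = true), x k) (fun k => decide (t ≤ x k)) h)
    apply le_iInf₂
    intro k hk
    exact of_decide_eq_true hk

lemma cont_finset_sup {ι X : Type*} [TopologicalSpace X] (s : Finset ι)
    (g : ι → X → unitInterval) (hg : ∀ i, Continuous (g i)) :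
    Continuous (fun x => s.sup (fun i => g i x)) := by
  classical
  induction s using Finset.induction_on with
  | empty => simp only [Finset.sup_empty]; exact continuous_const
  | @insert a s ha ih =>
    simp only [Finset.sup_insert]
    have h2 : (fun x => g a x ⊔ s.sup (fun i => g i x))
        = fun x => max (g a x) (s.sup (fun i => g i x)) :=
      funext fun x => rfl
    rw [h2]
    exact (hg a).max ih

lemma cont_finset_inf {ι X : Type*} [TopologicalSpace X] (s : Finset ι)
    (g : ι → X → unitInterval) (hg : ∀ i, Continuous (g i)) :
    Continuous (fun x => s.inf (fun i => g i x)) := by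
  classical
  induction s using Finset.induction_on with
  | empty => simp only [Finset.inf_empty]; exact continuous_const
  | @insert a s ha ih =>
    simp only [Finset.inf_insert]
    have h2 : (fun x => g a x ⊓ s.inf (fun i => g i x))
        = fun x => min (g a x) (s.inf (fun i => g i x)) :=
      funext fun x => rfl
    rw [h2]
    exact (hg a).min ih

open Classical in
lemma Tmap_eq_sup {m n : ℕ} (f : (Fin m → Bool) → (Fin n → Bool))
    (x : Fin m → unitInterval) (i : Fin n) :
    Tmap f x i = Finset.univ.sup (fun ε : Fin m → Bool =>
      if f ε i = true then
        Finset.univ.inf (fun k : Fin m => if ε k = true then x k else ⊤)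
      else ⊥) := by
  rw [Tmap, Finset.sup_eq_iSup]
  apply iSup_congr
  intro ε
  rw [iSup_pos (Finset.mem_univ ε)]
  by_cases h : f ε i = true
  · rw [iSup_pos h, if_pos h, Finset.inf_eq_iInf]
    apply iInf_congr
    intro k
    rw [iInf_pos (Finset.mem_univ k)]
    by_cases hk : ε k = true
    · rw [iInf_pos hk, if_pos hk]
    · rw [iInf_neg hk, if_neg hk]
  · rw [iSup_neg h, if_neg h]

lemma Tmap_continuous {m n : ℕ} (f : (Fin m → Bool) → (Fin n → Bool)) :
    Continuous (Tmap f) := by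
  apply continuous_pi
  intro i
  have : (fun x => Tmap f x i) = fun x : Fin m → unitInterval =>
      Finset.univ.sup (fun ε : Fin m → Bool =>
        if f ε i = true then
          Finset.univ.inf (fun k : Fin m => if ε k = true then x k else ⊤)
        else ⊥) := funext fun x => Tmap_eq_sup f x i
  rw [this]
  apply cont_finset_sup
  intro ε
  by_cases h : f ε i = true
  · simp only [if_pos h]
    apply cont_finset_inf
    intro k
    by_cases hk : ε k = true
    · simp only [if_pos hk]; exact continuous_apply k
    · simp only [if_neg hk]; exact continuous_const
  · simp only [if_neg h]; exact continuous_const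

lemma Tmap_monotone {m n : ℕ} (f : (Fin m → Bool) → (Fin n → Bool)) :
    Monotone (Tmap f) := by
  intro x y h i
  rw [Tmap]
  apply iSup₂_mono
  intro ε _
  apply iInf₂_mono
  intro k _
  exact h k

open MeasureTheory in
lemma integral_ind (a : unitInterval) :
    ∫ t in Set.Ioc (0:ℝ) 1, (if t ≤ (a:ℝ) then (1:ℝ) else 0) = (a:ℝ) := by
  have h1 : (fun t : ℝ => (if t ≤ (a:ℝ) then (1:ℝ) else 0))
      = (Set.Iic (a:ℝ)).indicator (fun _ => (1:ℝ)) := by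
    funext t
    rw [Set.indicator_apply]
    simp [Set.mem_Iic]
  rw [h1, setIntegral_indicator measurableSet_Iic, Set.Ioc_inter_Iic,
    setIntegral_const]
  have h2 : (1:ℝ) ⊓ (a:ℝ) = (a:ℝ) := inf_eq_right.2 a.2.2
  rw [h2, Real.volume_real_Ioc_of_le a.2.1, smul_eq_mul, mul_one, sub_zero]

open MeasureTheory in
lemma integrable_ind (a : unitInterval) :
    Integrable (fun t : ℝ => (if t ≤ (a:ℝ) then (1:ℝ) else 0))
      (volume.restrict (Set.Ioc (0:ℝ) 1)) := by
  have h1 : (fun t : ℝ => (if t ≤ (a:ℝ) then (1:ℝ) else 0))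
      = (Set.Iic (a:ℝ)).indicator (fun _ => (1:ℝ)) := by
    funext t
    rw [Set.indicator_apply]
    simp [Set.mem_Iic]
  rw [h1]
  exact (integrableOn_const (by simp) (by simp)).indicator measurableSet_Iic

lemma wt_cast {n : ℕ} (v : Fin n → Bool) :
    ((wt v : ℕ) : ℝ) = ∑ i, (if v i = true then (1:ℝ) else 0) := by
  rw [wt]
  push_cast
  apply Finset.sum_congr rfl
  intro i _
  split <;> simp

open MeasureTheory in
lemma sum_Tmap {n : ℕ} {f : (Fin n → Bool) → (Fin n → Bool)} (hf : Cotransverse f)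
    (x : Fin n → unitInterval) :
    ∑ i, (Tmap f x i : ℝ) = ∑ i, (x i : ℝ) := by
  obtain ⟨hwt, htop⟩ := wt_f hf
  have hmono := monotone_of_cotransverse hf
  have key : ∀ t ∈ Set.Ioc (0:ℝ) 1,
      ∑ i, (if t ≤ (Tmap f x i : ℝ) then (1:ℝ) else 0)
        = ∑ k, (if t ≤ (x k : ℝ) then (1:ℝ) else 0) := by
    intro t ht
    have ht' : t ∈ unitInterval := ⟨le_of_lt ht.1, ht.2⟩
    have h1 : ∀ i, (t ≤ (Tmap f x i : ℝ))
        ↔ f (fun k => decide ((⟨t, ht'⟩ : unitInterval) ≤ x k)) i = true := by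
      intro i
      rw [show (t ≤ (Tmap f x i : ℝ)) ↔ (⟨t, ht'⟩ : unitInterval) ≤ Tmap f x i from
        Iff.rfl]
      exact le_Tmap_iff hmono htop x i ⟨t, ht'⟩
    calc ∑ i, (if t ≤ (Tmap f x i : ℝ) then (1:ℝ) else 0)
        = ∑ i, (if f (fun k => decide ((⟨t, ht'⟩ : unitInterval) ≤ x k)) i = true
            then (1:ℝ) else 0) :=
          Finset.sum_congr rfl fun i _ => if_congr (h1 i) rfl rfl
      _ = ((wt (f (fun k => decide ((⟨t, ht'⟩ : unitInterval) ≤ x k))) : ℕ) : ℝ) :=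
          (wt_cast _).symm
      _ = ((wt (fun k => decide ((⟨t, ht'⟩ : unitInterval) ≤ x k)) : ℕ) : ℝ) := by
          rw [hwt]
      _ = ∑ k, (if t ≤ (x k : ℝ) then (1:ℝ) else 0) := by
          rw [wt_cast]
          apply Finset.sum_congr rfl
          intro k _
          apply if_congr _ rfl rfl
          rw [decide_eq_true_eq]
          exact Subtype.mk_le_mk
  calc ∑ i, (Tmap f x i : ℝ)
      = ∑ i, ∫ t in Set.Ioc (0:ℝ) 1, (if t ≤ (Tmap f x i : ℝ) then (1:ℝ) else 0) :=
        Finset.sum_congr rfl fun i _ => (integral_ind _).symm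
    _ = ∫ t in Set.Ioc (0:ℝ) 1, ∑ i, (if t ≤ (Tmap f x i : ℝ) then (1:ℝ) else 0) :=
        (integral_finset_sum _ (fun i _ => integrable_ind _)).symm
    _ = ∫ t in Set.Ioc (0:ℝ) 1, ∑ k, (if t ≤ (x k : ℝ) then (1:ℝ) else 0) :=
        setIntegral_congr_fun measurableSet_Ioc key
    _ = ∑ k, ∫ t in Set.Ioc (0:ℝ) 1, (if t ≤ (x k : ℝ) then (1:ℝ) else 0) :=
        integral_finset_sum _ (fun k _ => integrable_ind _)
    _ = ∑ k, (x k : ℝ) := Finset.sum_congr rfl fun k _ => integral_ind _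

/-- For a cotransverse map `f : [n] → [n]`, the map `T(f) : [0,1]^n → [0,1]^n`
is continuous, strictly increasing, and preserves the coordinate sum `h`. -/
theorem stmt5 (n : ℕ) (f : (Fin n → Bool) → (Fin n → Bool))
    (hf : Cotransverse f) :
    Continuous (Tmap f) ∧
    Monotone (Tmap f) ∧
    (∀ x y : Fin n → unitInterval, x ≤ y → Tmap f x = Tmap f y → x = y) ∧
    (∀ x : Fin n → unitInterval, ∑ i, (Tmap f x i : ℝ) = ∑ i, (x i : ℝ)) := by
  refine ⟨Tmap_continuous f, Tmap_monotone f, ?_, sum_Tmap hf⟩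
  intro x y hxy hT
  have hsum : ∑ i, (x i : ℝ) = ∑ i, (y i : ℝ) := by
    rw [← sum_Tmap hf x, ← sum_Tmap hf y, hT]
  have hzero : ∑ i, ((y i : ℝ) - (x i : ℝ)) = 0 := by
    rw [Finset.sum_sub_distrib, hsum, sub_self]
  have heach := (Finset.sum_eq_zero_iff_of_nonneg
    (fun i _ => sub_nonneg.2 (Subtype.coe_le_coe.2 (hxy i)))).1 hzero
  funext i
  have := heach i (Finset.mem_univ i)
  exact Subtype.ext (by linarith)
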